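/- Let K be an infinite field and Γ = {α_1, …, α_n} a finite group of field automorphisms of K, and let v be a positive integer. Then the family of functions x_i∘α_j : K^v → K, (k_1, …, k_v) ↦ α_j(k_i), indexed by the pairs (i,j) with 1 ≤ i ≤ v and 1 ≤ j ≤ n, is algebraically independent over K in the K-algebra of K-valued functions on K^v; equivalently, the K-algebra homomorphism from the multivariate polynomial ring over K in the n·v variables y_{ji} to the algebra of functions K^v → K sending y_{ji} to x_i∘α_j is injective. -/

import Mathlib

/-- The functions `x_i ∘ α_j : K^v → K`, `(k_1, …, k_v) ↦ α_j(k_i)`. -/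
def conjFn {K : Type*} [Field K] {n v : ℕ} (α : Fin n → RingAut K)
    (p : Fin v × Fin n) : (Fin v → K) → K :=
  fun k => α p.2 (k p.1)

open MvPolynomial Module

/-- A multivariate polynomial over an integral domain that vanishes on all points of an
infinite subset is zero (version for `Fin m`). -/
private theorem auxFin {K : Type*} [CommRing K] [IsDomain K] {S : Set K} (hS : S.Infinite) :
    ∀ {m : ℕ} (p : MvPolynomial (Fin m) K),
      (∀ x : Fin m → K, (∀ i, x i ∈ S) → MvPolynomial.eval x p = 0) → p = 0 := by
  intro m
  induction m with
  | zero =>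
    intro p h
    apply (MvPolynomial.isEmptyRingEquiv K (Fin 0)).injective
    rw [RingEquiv.map_zero]
    convert h finZeroElim (fun i => i.elim0)
    obtain ⟨r, rfl⟩ := (MvPolynomial.isEmptyRingEquiv K (Fin 0)).symm.surjective p
    simp
    exact MvPolynomial.coeff_zero_C r
  | succ m ih =>
    intro p h
    apply (finSuccEquiv K m).injective
    simp only [map_zero]
    apply Polynomial.ext
    intro l
    rw [Polynomial.coeff_zero]
    apply ih
    intro x hx
    have hq : Polynomial.map (eval x) (finSuccEquiv K m p) = 0 := by
      apply Polynomial.eq_zero_of_infinite_isRoot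
      apply hS.mono
      intro s hs
      simp only [Set.mem_setOf_eq, Polynomial.IsRoot]
      rw [← eval_eq_eval_mv_eval']
      exact h _ (fun i => Fin.cases hs hx i)
    have := congrArg (fun q => Polynomial.coeff q l) hq
    simpa [Polynomial.coeff_map] using this

/-- A multivariate polynomial over an integral domain that vanishes on all points of an
infinite subset is zero (finitely many variables). -/
private theorem auxFintype {K : Type*} [CommRing K] [IsDomain K] {S : Set K} (hS : S.Infinite)
    {σ : Type*} [Fintype σ] (p : MvPolynomial σ K)
    (h : ∀ x : σ → K, (∀ i, x i ∈ S) → MvPolynomial.eval x p = 0) : p = 0 := by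
  classical
  let e := Fintype.equivFin σ
  have h0 : MvPolynomial.rename e p = 0 := by
    apply auxFin hS
    intro x hx
    rw [MvPolynomial.eval_rename]
    exact h _ (fun i => hx (e i))
  exact (MvPolynomial.rename_injective e e.injective) (by rw [h0, map_zero])

/-- Let `K` be an infinite field and `Γ = {α_1, …, α_n}` a finite group of field
automorphisms of `K`, and `v` a positive integer.  Then the family of functions
`x_i ∘ α_j : K^v → K` is algebraically independent over `K` in the `K`-algebra of
`K`-valued functions on `K^v`. -/
theorem conjFns_algebraicIndependent (K : Type*) [Field K] [Infinite K]
    (n v : ℕ) (hv : 0 < v) (Γ : Subgroup (RingAut K)) [Finite Γ] (e : Fin n ≃ Γ) :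
    AlgebraicIndependent K (conjFn (fun j => (e j : RingAut K)) (v := v)) := by
  classical
  haveI : Fintype Γ := Fintype.ofEquiv _ e
  set α : Fin n → RingAut K := fun j => (e j : RingAut K) with hα
  rw [algebraicIndependent_iff]
  intro p hp
  -- pointwise vanishing of p at the "conjugate" points
  have hval : ∀ k : Fin v → K, eval (fun s : Fin v × Fin n => α s.2 (k s.1)) p = 0 := by
    intro k
    have h1 := congrFun hp k
    have h2 : (aeval (conjFn α) p : (Fin v → K) → K) k
        = aeval (fun s : Fin v × Fin n => conjFn α s k) p := by
      have := comp_aeval_apply (Pi.evalAlgHom K (fun _ : Fin v → K => K) k)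
        (f := conjFn α) p
      exact this
    rw [h2] at h1
    exact h1
  -- the fixed field
  set F := FixedPoints.subfield Γ K with hF
  haveI : FiniteDimensional F K := inferInstance
  have hfix : ∀ (j : Fin n) (r : F), α j (r : K) = (r : K) := fun j r => r.2 (e j)
  have hn : finrank F K = n := by
    rw [FixedPoints.finrank_eq_card Γ K, ← Fintype.card_fin n]
    exact (Fintype.card_congr e).symm
  let b : Basis (Fin n) F K := finBasisOfFinrankEq F K hn
  let M : Matrix (Fin n) (Fin n) K := Matrix.of fun j t => α j (b t)
  -- Dedekind: the matrix M is invertible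
  have hM : M.det ≠ 0 := by
    intro hdet
    obtain ⟨c, hc0, hc⟩ := Matrix.exists_vecMul_eq_zero_iff.mpr hdet
    have hbase : ∀ t, (∑ j, c j * α j (b t)) = 0 := by
      intro t
      have := congrFun hc t
      simpa [Matrix.vecMul, dotProduct, M] using this
    have hxall : ∀ x : K, (∑ j, c j * α j x) = 0 := by
      intro x
      have expand : ∀ j, α j x = ∑ t, ((b.repr x t : K) * α j (b t)) := by
        intro j
        conv_lhs => rw [← b.sum_repr x]
        rw [map_sum]
        refine Finset.sum_congr rfl fun t _ => ?_
        rw [show ((b.repr x t) • b t) = ((b.repr x t : K) * b t) from rfl, map_mul, hfix]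
      calc (∑ j, c j * α j x)
          = ∑ j, ∑ t, ((b.repr x t : K) * (c j * α j (b t))) := by
            refine Finset.sum_congr rfl fun j _ => ?_
            rw [expand j, Finset.mul_sum]
            exact Finset.sum_congr rfl fun t _ => by ring
        _ = ∑ t, ((b.repr x t : K) * ∑ j, (c j * α j (b t))) := by
            rw [Finset.sum_comm]
            exact Finset.sum_congr rfl fun t _ => (Finset.mul_sum _ _ _).symm
        _ = 0 := by simp [hbase]
    -- linear independence of distinct monoid homs
    have li : LinearIndependent K (fun j : Fin n => ((α j : K →* K) : K → K)) := by
      apply (linearIndependent_monoidHom K K).comp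
      intro j j' hjj'
      apply e.injective
      apply Subtype.ext
      apply RingEquiv.ext
      intro x
      exact DFunLike.congr_fun hjj' x
    have := Fintype.linearIndependent_iff.mp li c ?_
    · exact hc0 (funext this)
    · funext x
      simpa [Finset.sum_apply] using hxall x
  -- substitution by the matrix M
  let L : Fin v × Fin n → MvPolynomial (Fin v × Fin n) K :=
    fun s => ∑ t, MvPolynomial.C (M s.2 t) * MvPolynomial.X (s.1, t)
  set q : MvPolynomial (Fin v × Fin n) K := aeval L p with hq
  -- q vanishes at all F-points
  have hq0 : ∀ c : (Fin v × Fin n) → F, eval (fun s => (c s : K)) q = 0 := by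
    intro c
    set k : Fin v → K := fun i => ∑ t, ((c (i, t) : K) * b t) with hk
    have h3 : ∀ s : Fin v × Fin n,
        (aeval (fun s' : Fin v × Fin n => (c s' : K)) (L s) : K) = α s.2 (k s.1) := by
      intro s
      have hL : (aeval (fun s' : Fin v × Fin n => (c s' : K)) (L s) : K)
          = ∑ t, M s.2 t * (c (s.1, t) : K) := by
        simp [L]
      rw [hL, hk]
      rw [map_sum]
      refine Finset.sum_congr rfl fun t _ => ?_
      rw [map_mul, hfix]
      have : α s.2 (b t) = M s.2 t := rfl
      rw [this]
      ring
    have h1 : eval (fun s => (c s : K)) q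
        = eval (fun s : Fin v × Fin n => α s.2 (k s.1)) p := by
      rw [hq]
      calc eval (fun s => (c s : K)) (aeval L p)
          = aeval (fun s : Fin v × Fin n => (c s : K)) (aeval L p) := rfl
        _ = aeval (fun s : Fin v × Fin n =>
              (aeval (fun s' : Fin v × Fin n => (c s' : K)) (L s) : K)) p :=
            comp_aeval_apply _ _ p
        _ = aeval (fun s : Fin v × Fin n => α s.2 (k s.1)) p := by rw [funext h3]
        _ = eval (fun s : Fin v × Fin n => α s.2 (k s.1)) p := rfl
    rw [h1]
    exact hval k
  -- F is infinite
  haveI hFinf : Infinite F := by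
    by_contra hinf
    rw [not_infinite_iff_finite] at hinf
    have : Finite K := Module.finite_of_finite F
    exact absurd this Infinite.not_finite
  have hSinf : ((F : Set K)).Infinite :=
    Set.infinite_of_injective_forall_mem (f := fun r : F => (r : K))
      Subtype.val_injective (fun r => r.2)
  -- hence q = 0
  have hqzero : q = 0 := by
    apply auxFintype hSinf
    intro x hx
    exact hq0 (fun s => ⟨x s, hx s⟩)
  -- invert the substitution
  have hMM : M * M⁻¹ = 1 := Matrix.mul_nonsing_inv M (isUnit_iff_ne_zero.mpr hM)
  let L' : Fin v × Fin n → MvPolynomial (Fin v × Fin n) K :=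
    fun s => ∑ t, MvPolynomial.C (M⁻¹ s.2 t) * MvPolynomial.X (s.1, t)
  have hcomp : aeval L' q = p := by
    have key : ∀ s : Fin v × Fin n, aeval L' (L s) = MvPolynomial.X s := by
      intro s
      have h4 : aeval L' (L s)
          = ∑ t, ∑ u, MvPolynomial.C (M s.2 t * M⁻¹ t u) * MvPolynomial.X (s.1, u) := by
        simp only [L, L', map_sum, map_mul, aeval_C, aeval_X, Finset.mul_sum]
        refine Finset.sum_congr rfl fun t _ => Finset.sum_congr rfl fun u _ => ?_
        simp [mul_assoc]
      rw [h4, Finset.sum_comm]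
      have h5 : ∀ u, (∑ t, MvPolynomial.C (M s.2 t * M⁻¹ t u) * MvPolynomial.X (s.1, u))
          = MvPolynomial.C ((M * M⁻¹) s.2 u) * MvPolynomial.X (s.1, u) := by
        intro u
        rw [← Finset.sum_mul, ← map_sum, Matrix.mul_apply]
      simp only [h5, hMM, Matrix.one_apply]
      simp [apply_ite MvPolynomial.C]
    calc aeval L' q = aeval (fun s : Fin v × Fin n => aeval L' (L s)) p := by
          rw [hq]; exact comp_aeval_apply _ _ p
      _ = p := by
          simp only [key]
          first
            | exact aeval_X_left_apply p
            | rfl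
            | simp [aeval_X_left_apply]
  rw [hqzero, map_zero] at hcomp
  exact hcomp.symm
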